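/- First conditional-entropy estimate: let κ = (κ_1,…,κ_L) with L ≥ 2, and suppose that for each ℓ ∈ [L], τ_ℓ ≥ 0 is a valid log-Sobolev constant for the multislice Ω_{κ^{∖ℓ}}. Then for every f : Ω_κ → [0,∞), Σ_{ℓ=1}^{L} (1 − κ_ℓ/n)·E[Ent(f | ξ_ℓ)] ≤ (L−2)·max_{ℓ∈[L]} τ_ℓ · 𝔈_κ(√f, √f). -/

import Mathlib

open Finset

namespace Multislice

/-- The multislice `Ω_κ`: sequences of length `n` with values in `Fin L`
in which color `ℓ` appears exactly `κ ℓ` times. -/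
def slice (L n : ℕ) (κ : Fin L → ℕ) : Finset (Fin n → Fin L) :=
  Finset.univ.filter fun ω => ∀ ℓ, (Finset.univ.filter fun i => ω i = ℓ).card = κ ℓ

/-- Average of `f` with respect to the uniform distribution on `Ω`. -/
noncomputable def expect {L n : ℕ} (Ω : Finset (Fin n → Fin L))
    (f : (Fin n → Fin L) → ℝ) : ℝ :=
  (∑ ω ∈ Ω, f ω) / Ω.card

/-- Discrete gradient `(∇^{ij} f)(ω) = f(ω^{ij}) - f(ω)`. -/
noncomputable def grad {L n : ℕ} (i j : Fin n) (f : (Fin n → Fin L) → ℝ)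
    (ω : Fin n → Fin L) : ℝ :=
  f (ω ∘ Equiv.swap i j) - f ω

/-- The Dirichlet form `𝔈_κ(f,g) = (1/(2n)) Σ_{i<j} E[(∇^{ij}f)(∇^{ij}g)]`. -/
noncomputable def dirichlet {L n : ℕ} (Ω : Finset (Fin n → Fin L))
    (f g : (Fin n → Fin L) → ℝ) : ℝ :=
  (1 / (2 * (n : ℝ))) *
    ∑ p ∈ Finset.univ.filter (fun p : Fin n × Fin n => p.1 < p.2),
      expect Ω fun ω => grad p.1 p.2 f ω * grad p.1 p.2 g ω

/-- The weighted Dirichlet form `𝔈^G_κ(f,g) = (1/2) Σ_{i<j} G_{ij} E[(∇^{ij}f)(∇^{ij}g)]`. -/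
noncomputable def wDirichlet {L n : ℕ} (G : Fin n → Fin n → ℝ)
    (Ω : Finset (Fin n → Fin L)) (f g : (Fin n → Fin L) → ℝ) : ℝ :=
  (1 / 2) *
    ∑ p ∈ Finset.univ.filter (fun p : Fin n × Fin n => p.1 < p.2),
      G p.1 p.2 * expect Ω fun ω => grad p.1 p.2 f ω * grad p.1 p.2 g ω

/-- Entropy `Ent(f) = E[f log f] - E[f] log E[f]` (note `Real.log 0 = 0`). -/
noncomputable def entropy {L n : ℕ} (Ω : Finset (Fin n → Fin L))
    (f : (Fin n → Fin L) → ℝ) : ℝ :=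
  expect Ω (fun ω => f ω * Real.log (f ω)) - expect Ω f * Real.log (expect Ω f)

/-- Variance `Var(f) = E[f²] - (E[f])²`. -/
noncomputable def variance {L n : ℕ} (Ω : Finset (Fin n → Fin L))
    (f : (Fin n → Fin L) → ℝ) : ℝ :=
  expect Ω (fun ω => f ω ^ 2) - (expect Ω f) ^ 2

/-- The edge boundary `∂A` of `A ⊆ Ω`: edges (recorded as pairs with first endpoint
in `A` and second endpoint in `Ω \ A`) between `A` and its complement, where two
states are adjacent when they differ in exactly two coordinates. -/
def edgeBoundary {L n : ℕ} (Ω A : Finset (Fin n → Fin L)) :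
    Finset ((Fin n → Fin L) × (Fin n → Fin L)) :=
  (A ×ˢ (Ω \ A)).filter fun p => (Finset.univ.filter fun i => p.1 i ≠ p.2 i).card = 2

/-- The `ℓ`-colored region `ξ_ℓ(ω) = {i : ω i = ℓ}`. -/
def xi {L n : ℕ} (ℓ : Fin L) (ω : Fin n → Fin L) : Finset (Fin n) :=
  Finset.univ.filter fun i => ω i = ℓ

/-- The parameter `κ^{∖ℓ}` obtained from `κ` by removing the `ℓ`-th entry. -/
def removeIdx {L : ℕ} (κ : Fin L → ℕ) (ℓ : Fin L) (m : Fin (L - 1)) : ℕ :=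
  if (m : ℕ) < (ℓ : ℕ) then κ ⟨m, by have := m.isLt; omega⟩
  else κ ⟨(m : ℕ) + 1, by have := m.isLt; omega⟩

def cmap (L : ℕ) (ℓ : Fin L) (m : Fin (L-1)) : Fin L :=
  if (m : ℕ) < (ℓ : ℕ) then ⟨m, by have := m.isLt; omega⟩
  else ⟨(m:ℕ)+1, by have := m.isLt; omega⟩

lemma cmap_val {L : ℕ} (ℓ : Fin L) (m : Fin (L-1)) :
    (cmap L ℓ m : ℕ) = if (m : ℕ) < (ℓ : ℕ) then (m:ℕ) else (m:ℕ)+1 := by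
  unfold cmap; split <;> rfl

lemma removeIdx_eq_cmap {L : ℕ} (κ : Fin L → ℕ) (ℓ : Fin L) (m : Fin (L-1)) :
    removeIdx κ ℓ m = κ (cmap L ℓ m) := by
  unfold removeIdx cmap; split <;> rfl

lemma cmap_ne {L : ℕ} (ℓ : Fin L) (m : Fin (L-1)) : cmap L ℓ m ≠ ℓ := by
  intro hc
  have := congrArg Fin.val hc
  rw [cmap_val] at this
  split_ifs at this <;> omega

lemma cmap_inj {L : ℕ} (ℓ : Fin L) : Function.Injective (cmap L ℓ) := by
  intro a b hab
  have := congrArg Fin.val hab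
  rw [cmap_val, cmap_val] at this
  apply Fin.ext
  split_ifs at this <;> omega

def cinv {L : ℕ} (hL : 2 ≤ L) (ℓ : Fin L) (x : Fin L) : Fin (L-1) :=
  if h : (x : ℕ) < (ℓ : ℕ) then ⟨x, by have := x.isLt; have := ℓ.isLt; omega⟩
  else ⟨(x:ℕ)-1, by have := x.isLt; omega⟩

lemma cinv_val {L : ℕ} (hL : 2 ≤ L) (ℓ : Fin L) (x : Fin L) :
    (cinv hL ℓ x : ℕ) = if (x : ℕ) < (ℓ : ℕ) then (x:ℕ) else (x:ℕ)-1 := by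
  unfold cinv; split <;> rfl

lemma cinv_cmap {L : ℕ} (hL : 2 ≤ L) (ℓ : Fin L) (m : Fin (L-1)) :
    cinv hL ℓ (cmap L ℓ m) = m := by
  apply Fin.ext
  rw [cinv_val, cmap_val]
  have := m.isLt
  split_ifs <;> simp_all <;> omega

lemma cmap_cinv {L : ℕ} (hL : 2 ≤ L) (ℓ : Fin L) (x : Fin L) (hx : x ≠ ℓ) :
    cmap L ℓ (cinv hL ℓ x) = x := by
  have hx' : (x : ℕ) ≠ (ℓ : ℕ) := fun h => hx (Fin.ext h)
  apply Fin.ext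
  rw [cmap_val, cinv_val]
  have := x.isLt
  split_ifs <;> simp_all <;> omega


section Transport
variable {L n : ℕ} {κ : Fin L → ℕ} {ℓ : Fin L} {A : Finset (Fin n)}

/-- order-preserving enumeration of `Aᶜ`. -/
noncomputable def em (κ : Fin L → ℕ) (ℓ : Fin L) (A : Finset (Fin n))
    (hAc : Aᶜ.card = n - κ ℓ) (k : Fin (n - κ ℓ)) : Fin n :=
  ((Aᶜ.orderIsoOfFin hAc) k : Fin n)

noncomputable def eminv (κ : Fin L → ℕ) (ℓ : Fin L) (A : Finset (Fin n))
    (hAc : Aᶜ.card = n - κ ℓ) (i : Fin n) (hi : i ∉ A) : Fin (n - κ ℓ) :=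
  (Aᶜ.orderIsoOfFin hAc).symm ⟨i, Finset.mem_compl.mpr hi⟩

lemma em_not_mem (hAc : Aᶜ.card = n - κ ℓ) (k : Fin (n - κ ℓ)) : em κ ℓ A hAc k ∉ A := by
  have h : em κ ℓ A hAc k ∈ Aᶜ := ((Aᶜ.orderIsoOfFin hAc) k).2
  exact Finset.mem_compl.mp h

lemma em_eminv (hAc : Aᶜ.card = n - κ ℓ) (i : Fin n) (hi : i ∉ A) :
    em κ ℓ A hAc (eminv κ ℓ A hAc i hi) = i := by
  simp [em, eminv]

lemma eminv_em (hAc : Aᶜ.card = n - κ ℓ) (k : Fin (n - κ ℓ)) (h : em κ ℓ A hAc k ∉ A) :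
    eminv κ ℓ A hAc (em κ ℓ A hAc k) h = k := by
  have : (⟨em κ ℓ A hAc k, Finset.mem_compl.mpr h⟩ : {x // x ∈ Aᶜ}) = (Aᶜ.orderIsoOfFin hAc) k := by
    apply Subtype.ext; rfl
  rw [eminv, this, OrderIso.symm_apply_apply]

lemma em_strictMono (hAc : Aᶜ.card = n - κ ℓ) : StrictMono (em κ ℓ A hAc) := by
  intro a b hab
  have := (Aᶜ.orderIsoOfFin hAc).strictMono hab
  exact this

lemma em_inj (hAc : Aᶜ.card = n - κ ℓ) : Function.Injective (em κ ℓ A hAc) :=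
  (em_strictMono hAc).injective

/-- The bijection from the small multislice to the conditional slice. -/
noncomputable def phi (κ : Fin L → ℕ) (ℓ : Fin L) (A : Finset (Fin n))
    (hAc : Aᶜ.card = n - κ ℓ) (g : Fin (n - κ ℓ) → Fin (L-1)) (i : Fin n) : Fin L :=
  if h : i ∈ A then ℓ else cmap L ℓ (g (eminv κ ℓ A hAc i h))

lemma phi_mem_A (hAc : Aᶜ.card = n - κ ℓ) (g : Fin (n - κ ℓ) → Fin (L-1)) {i : Fin n}
    (h : i ∈ A) : phi κ ℓ A hAc g i = ℓ := dif_pos h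

lemma phi_not_mem (hAc : Aᶜ.card = n - κ ℓ) (g : Fin (n - κ ℓ) → Fin (L-1)) {i : Fin n}
    (h : i ∉ A) : phi κ ℓ A hAc g i = cmap L ℓ (g (eminv κ ℓ A hAc i h)) := dif_neg h

lemma phi_em (hAc : Aᶜ.card = n - κ ℓ) (g : Fin (n - κ ℓ) → Fin (L-1)) (k : Fin (n - κ ℓ)) :
    phi κ ℓ A hAc g (em κ ℓ A hAc k) = cmap L ℓ (g k) := by
  rw [phi_not_mem hAc g (em_not_mem hAc k), eminv_em]

lemma phi_swap (hAc : Aᶜ.card = n - κ ℓ) (g : Fin (n - κ ℓ) → Fin (L-1))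
    (k k' : Fin (n - κ ℓ)) :
    phi κ ℓ A hAc (g ∘ Equiv.swap k k') =
      (phi κ ℓ A hAc g) ∘ Equiv.swap (em κ ℓ A hAc k) (em κ ℓ A hAc k') := by
  funext i
  by_cases h1 : i = em κ ℓ A hAc k
  · subst h1
    simp only [Function.comp_apply, Equiv.swap_apply_left]
    rw [phi_em, phi_em]
    simp [Equiv.swap_apply_left]
  by_cases h2 : i = em κ ℓ A hAc k'
  · subst h2
    simp only [Function.comp_apply, Equiv.swap_apply_right]
    rw [phi_em, phi_em]
    simp [Equiv.swap_apply_right]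
  · simp only [Function.comp_apply, Equiv.swap_apply_of_ne_of_ne h1 h2]
    by_cases h : i ∈ A
    · rw [phi_mem_A hAc _ h, phi_mem_A hAc _ h]
    · rw [phi_not_mem hAc _ h, phi_not_mem hAc _ h]
      simp only [Function.comp_apply]
      congr 2
      apply Equiv.swap_apply_of_ne_of_ne
      · intro hc; apply h1; rw [← em_eminv hAc i h, hc]
      · intro hc; apply h2; rw [← em_eminv hAc i h, hc]

lemma xi_phi (hAc : Aᶜ.card = n - κ ℓ) (g : Fin (n - κ ℓ) → Fin (L-1)) :
    xi ℓ (phi κ ℓ A hAc g) = A := by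
  ext i
  simp only [xi, Finset.mem_filter, Finset.mem_univ, true_and]
  constructor
  · intro h
    by_contra hc
    rw [phi_not_mem hAc g hc] at h
    exact cmap_ne ℓ _ h
  · intro h; exact phi_mem_A hAc g h

/-- counting: for `x ≠ ℓ`, fibers of `phi g` over `x` biject with fibers of `cmap ∘ g`. -/
lemma count_phi (hAc : Aᶜ.card = n - κ ℓ) (g : Fin (n - κ ℓ) → Fin (L-1)) (x : Fin L)
    (hx : x ≠ ℓ) :
    (Finset.univ.filter fun i => phi κ ℓ A hAc g i = x).card
      = (Finset.univ.filter fun k => cmap L ℓ (g k) = x).card := by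
  apply Finset.card_bij' (i := fun i hi => eminv κ ℓ A hAc i (by
      intro hiA
      rw [Finset.mem_filter] at hi
      rw [phi_mem_A hAc g hiA] at hi
      exact hx hi.2.symm))
    (j := fun k _ => em κ ℓ A hAc k)
  · intro a ha
    rw [Finset.mem_filter] at ha ⊢
    refine ⟨Finset.mem_univ _, ?_⟩
    have hnA : a ∉ A := by
      intro hiA
      rw [phi_mem_A hAc g hiA] at ha
      exact hx ha.2.symm
    have h2 := ha.2
    rw [phi_not_mem hAc g hnA] at h2
    exact h2
  · intro a _
    apply em_eminv
  · intro k _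
    apply eminv_em
  · intro k hk
    rw [Finset.mem_filter] at hk ⊢
    refine ⟨Finset.mem_univ _, ?_⟩
    rw [phi_em]
    exact hk.2

lemma filter_cmap_eq (g : Fin (n - κ ℓ) → Fin (L-1)) (m' : Fin (L-1)) :
    (Finset.univ.filter fun k => cmap L ℓ (g k) = cmap L ℓ m')
      = Finset.univ.filter fun k => g k = m' := by
  apply Finset.filter_congr
  intro k _
  simp [(cmap_inj ℓ).eq_iff]

lemma phi_mem_slice_iff (hL : 2 ≤ L) (hA : A.card = κ ℓ) (hAc : Aᶜ.card = n - κ ℓ)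
    (g : Fin (n - κ ℓ) → Fin (L-1)) :
    phi κ ℓ A hAc g ∈ slice L n κ ↔ g ∈ slice (L-1) (n - κ ℓ) (removeIdx κ ℓ) := by
  simp only [slice, Finset.mem_filter, Finset.mem_univ, true_and]
  constructor
  · intro h m'
    have h2 := h (cmap L ℓ m')
    rw [count_phi hAc g _ (cmap_ne ℓ m'), filter_cmap_eq] at h2
    rw [removeIdx_eq_cmap]
    exact h2
  · intro h x
    by_cases hx : x = ℓ
    · rw [hx]
      have hxi : (Finset.univ.filter fun i => phi κ ℓ A hAc g i = ℓ) = A := xi_phi hAc g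
      rw [hxi, hA]
    · rw [count_phi hAc g x hx]
      have hx2 : cmap L ℓ (cinv hL ℓ x) = x := cmap_cinv hL ℓ x hx
      have h2 := h (cinv hL ℓ x)
      rw [removeIdx_eq_cmap, hx2] at h2
      rw [← hx2, filter_cmap_eq, h2, hx2]

noncomputable def psi (hL : 2 ≤ L) (κ : Fin L → ℕ) (ℓ : Fin L) (A : Finset (Fin n))
    (hAc : Aᶜ.card = n - κ ℓ) (ω : Fin n → Fin L) (k : Fin (n - κ ℓ)) : Fin (L-1) :=
  cinv hL ℓ (ω (em κ ℓ A hAc k))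

lemma psi_phi (hL : 2 ≤ L) (hAc : Aᶜ.card = n - κ ℓ) (g : Fin (n - κ ℓ) → Fin (L-1)) :
    psi hL κ ℓ A hAc (phi κ ℓ A hAc g) = g := by
  funext k
  unfold psi
  rw [phi_em, cinv_cmap]

lemma phi_psi (hL : 2 ≤ L) (hAc : Aᶜ.card = n - κ ℓ) (ω : Fin n → Fin L)
    (hω : xi ℓ ω = A) : phi κ ℓ A hAc (psi hL κ ℓ A hAc ω) = ω := by
  funext i
  by_cases h : i ∈ A
  · rw [phi_mem_A hAc _ h]
    rw [← hω] at h
    simp only [xi, Finset.mem_filter, Finset.mem_univ, true_and] at h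
    exact h.symm
  · rw [phi_not_mem hAc _ h]
    unfold psi
    rw [em_eminv]
    apply cmap_cinv
    intro hc
    apply h
    rw [← hω]
    simp [xi, hc]

lemma sum_phi (hL : 2 ≤ L) (hA : A.card = κ ℓ) (hAc : Aᶜ.card = n - κ ℓ)
    (F : (Fin n → Fin L) → ℝ) :
    ∑ ω ∈ (slice L n κ).filter (fun ω => xi ℓ ω = A), F ω
      = ∑ g ∈ slice (L-1) (n - κ ℓ) (removeIdx κ ℓ), F (phi κ ℓ A hAc g) := by
  symm
  apply Finset.sum_bij' (i := fun g _ => phi κ ℓ A hAc g)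
    (j := fun ω _ => psi hL κ ℓ A hAc ω)
  · intro g hg
    rw [Finset.mem_filter]
    exact ⟨(phi_mem_slice_iff hL hA hAc g).mpr hg, xi_phi hAc g⟩
  · intro ω hω
    rw [Finset.mem_filter] at hω
    have h1 := phi_psi hL hAc ω hω.2
    exact (phi_mem_slice_iff hL hA hAc (psi hL κ ℓ A hAc ω)).mp (by rw [h1]; exact hω.1)
  · intro g _
    exact psi_phi hL hAc g
  · intro ω hω
    rw [Finset.mem_filter] at hω
    exact phi_psi hL hAc ω hω.2
  · intro g _
    rfl

lemma card_phi (hL : 2 ≤ L) (hA : A.card = κ ℓ) (hAc : Aᶜ.card = n - κ ℓ) :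
    ((slice L n κ).filter (fun ω => xi ℓ ω = A)).card
      = (slice (L-1) (n - κ ℓ) (removeIdx κ ℓ)).card := by
  have h := sum_phi hL hA hAc (fun _ => (1:ℝ))
  simpa using h

lemma expect_phi (hL : 2 ≤ L) (hA : A.card = κ ℓ) (hAc : Aᶜ.card = n - κ ℓ)
    (F : (Fin n → Fin L) → ℝ) :
    expect ((slice L n κ).filter fun ω => xi ℓ ω = A) F
      = expect (slice (L-1) (n - κ ℓ) (removeIdx κ ℓ)) (fun g => F (phi κ ℓ A hAc g)) := by
  unfold expect
  rw [sum_phi hL hA hAc, card_phi hL hA hAc]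

lemma entropy_phi (hL : 2 ≤ L) (hA : A.card = κ ℓ) (hAc : Aᶜ.card = n - κ ℓ)
    (f : (Fin n → Fin L) → ℝ) :
    entropy ((slice L n κ).filter fun ω => xi ℓ ω = A) f
      = entropy (slice (L-1) (n - κ ℓ) (removeIdx κ ℓ)) (fun g => f (phi κ ℓ A hAc g)) := by
  unfold entropy
  rw [expect_phi hL hA hAc (F := fun ω => f ω * Real.log (f ω)), expect_phi hL hA hAc (F := f)]

lemma grad_phi (hAc : Aᶜ.card = n - κ ℓ) (h : (Fin n → Fin L) → ℝ)
    (k k' : Fin (n - κ ℓ)) (g : Fin (n - κ ℓ) → Fin (L-1)) :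
    grad k k' (fun g' => h (phi κ ℓ A hAc g')) g
      = grad (em κ ℓ A hAc k) (em κ ℓ A hAc k') h (phi κ ℓ A hAc g) := by
  unfold grad
  rw [show phi κ ℓ A hAc g ∘ Equiv.swap (em κ ℓ A hAc k) (em κ ℓ A hAc k')
      = phi κ ℓ A hAc (g ∘ Equiv.swap k k') from (phi_swap hAc g k k').symm]

lemma pairsum_phi (hAc : Aᶜ.card = n - κ ℓ) (H : Fin n → Fin n → ℝ) :
    ∑ p ∈ Finset.univ.filter (fun p : Fin (n - κ ℓ) × Fin (n - κ ℓ) => p.1 < p.2),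
        H (em κ ℓ A hAc p.1) (em κ ℓ A hAc p.2)
      = ∑ q ∈ Finset.univ.filter
          (fun q : Fin n × Fin n => q.1 < q.2 ∧ q.1 ∉ A ∧ q.2 ∉ A), H q.1 q.2 := by
  apply Finset.sum_bij' (i := fun p _ => (em κ ℓ A hAc p.1, em κ ℓ A hAc p.2))
    (j := fun q hq => (eminv κ ℓ A hAc q.1 (by
        rw [Finset.mem_filter] at hq; exact hq.2.2.1),
      eminv κ ℓ A hAc q.2 (by rw [Finset.mem_filter] at hq; exact hq.2.2.2)))
  case hi =>
    intro p hp
    rw [Finset.mem_filter] at hp ⊢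
    exact ⟨Finset.mem_univ _, em_strictMono hAc hp.2, em_not_mem hAc _, em_not_mem hAc _⟩
  case hj =>
    intro q hq
    have hq' := Finset.mem_filter.mp hq
    rw [Finset.mem_filter]
    refine ⟨Finset.mem_univ _, ?_⟩
    apply (em_strictMono hAc).lt_iff_lt.mp
    rw [em_eminv, em_eminv]
    exact hq'.2.1
  case left_neg =>
    intro q hq
    exact Prod.ext (eminv_em hAc q.1 (em_not_mem hAc _)) (eminv_em hAc q.2 (em_not_mem hAc _))
  case right_neg =>
    intro q hq
    exact Prod.ext (em_eminv hAc q.1 (Finset.mem_filter.mp hq).2.2.1)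
      (em_eminv hAc q.2 (Finset.mem_filter.mp hq).2.2.2)
  case h =>
    intro p _
    rfl

lemma dirichlet_phi (hL : 2 ≤ L) (hA : A.card = κ ℓ) (hAc : Aᶜ.card = n - κ ℓ)
    (h : (Fin n → Fin L) → ℝ) :
    dirichlet (slice (L-1) (n - κ ℓ) (removeIdx κ ℓ))
        (fun g => h (phi κ ℓ A hAc g)) (fun g => h (phi κ ℓ A hAc g))
      = (1 / (2 * ((n - κ ℓ : ℕ) : ℝ))) *
        ∑ q ∈ Finset.univ.filter (fun q : Fin n × Fin n => q.1 < q.2 ∧ q.1 ∉ A ∧ q.2 ∉ A),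
          expect ((slice L n κ).filter fun ω => xi ℓ ω = A)
            (fun ω => grad q.1 q.2 h ω * grad q.1 q.2 h ω) := by
  unfold dirichlet
  congr 1
  rw [← pairsum_phi hAc (H := fun a b =>
    expect ((slice L n κ).filter fun ω => xi ℓ ω = A)
      (fun ω => grad a b h ω * grad a b h ω))]
  apply Finset.sum_congr rfl
  intro p _
  rw [expect_phi hL hA hAc]
  exact congrArg (expect _) (funext fun g => by rw [grad_phi hAc h p.1 p.2 g])

lemma step1 (hL : 2 ≤ L) (hA : A.card = κ ℓ) (hAc : Aᶜ.card = n - κ ℓ)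
    (τℓ : ℝ)
    (hτℓ : ∀ g : (Fin (n - κ ℓ) → Fin (L-1)) → ℝ, (∀ x, 0 ≤ g x) →
      entropy (slice (L-1) (n - κ ℓ) (removeIdx κ ℓ)) g ≤
        τℓ * dirichlet (slice (L-1) (n - κ ℓ) (removeIdx κ ℓ))
          (fun x => Real.sqrt (g x)) (fun x => Real.sqrt (g x)))
    (f : (Fin n → Fin L) → ℝ) (hf : ∀ ω, 0 ≤ f ω) :
    entropy ((slice L n κ).filter fun ω => xi ℓ ω = A) f ≤
      τℓ * ((1 / (2 * ((n - κ ℓ : ℕ) : ℝ))) *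
        ∑ q ∈ Finset.univ.filter (fun q : Fin n × Fin n => q.1 < q.2 ∧ q.1 ∉ A ∧ q.2 ∉ A),
          expect ((slice L n κ).filter fun ω => xi ℓ ω = A)
            (fun ω => grad q.1 q.2 (fun ω' => Real.sqrt (f ω')) ω *
              grad q.1 q.2 (fun ω' => Real.sqrt (f ω')) ω)) := by
  have h1 := hτℓ (fun g => f (phi κ ℓ A hAc g)) (fun g => hf _)
  have h2 := dirichlet_phi hL hA hAc (fun ω => Real.sqrt (f ω))
  rw [entropy_phi hL hA hAc f]
  refine le_trans h1 (le_of_eq ?_)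
  exact congrArg (fun x => τℓ * x) h2

lemma xi_card (ω : Fin n → Fin L) (hω : ω ∈ slice L n κ) (ℓ : Fin L) :
    (xi ℓ ω).card = κ ℓ := by
  simp only [slice, Finset.mem_filter, Finset.mem_univ, true_and] at hω
  exact hω ℓ

lemma choose_mul_card (hL : 2 ≤ L) (ℓ : Fin L) (hκn : κ ℓ ≤ n) :
    n.choose (κ ℓ) * (slice (L-1) (n - κ ℓ) (removeIdx κ ℓ)).card = (slice L n κ).card := by
  have h1 : (slice L n κ).card = ∑ A ∈ Finset.powersetCard (κ ℓ) (Finset.univ : Finset (Fin n)),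
      ((slice L n κ).filter fun ω => xi ℓ ω = A).card := by
    apply Finset.card_eq_sum_card_fiberwise
    intro ω hω
    rw [Finset.mem_coe, Finset.mem_powersetCard_univ]
    exact xi_card ω hω ℓ
  rw [h1]
  rw [Finset.sum_congr rfl (fun A hA => card_phi hL (Finset.mem_powersetCard_univ.mp hA)
    (by rw [Finset.card_compl, Finset.mem_powersetCard_univ.mp hA, Fintype.card_fin]))]
  rw [Finset.sum_const, Finset.card_powersetCard, Finset.card_univ, Fintype.card_fin, smul_eq_mul]

lemma stepell (hL : 2 ≤ L) (hκn : κ ℓ < n)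
    (τℓ : ℝ)
    (hτℓ : ∀ g : (Fin (n - κ ℓ) → Fin (L-1)) → ℝ, (∀ x, 0 ≤ g x) →
      entropy (slice (L-1) (n - κ ℓ) (removeIdx κ ℓ)) g ≤
        τℓ * dirichlet (slice (L-1) (n - κ ℓ) (removeIdx κ ℓ))
          (fun x => Real.sqrt (g x)) (fun x => Real.sqrt (g x)))
    (f : (Fin n → Fin L) → ℝ) (hf : ∀ ω, 0 ≤ f ω)
    (hne : (slice L n κ).card ≠ 0) :
    (1 - (κ ℓ : ℝ) / (n : ℝ)) *
      ((1 / (n.choose (κ ℓ) : ℝ)) *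
        ∑ B ∈ Finset.powersetCard (κ ℓ) (Finset.univ : Finset (Fin n)),
          entropy ((slice L n κ).filter fun ω => xi ℓ ω = B) f) ≤
      τℓ * ((1 / (2 * (n : ℝ))) * ((1 / ((slice L n κ).card : ℝ)) *
        ∑ ω ∈ slice L n κ,
          ∑ q ∈ Finset.univ.filter (fun q : Fin n × Fin n => q.1 < q.2),
            (if q.1 ∉ xi ℓ ω ∧ q.2 ∉ xi ℓ ω then
              grad q.1 q.2 (fun ω' => Real.sqrt (f ω')) ω *
                grad q.1 q.2 (fun ω' => Real.sqrt (f ω')) ω else 0))) := by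
  classical
  have hm0 : 0 < n - κ ℓ := by omega
  have hn0 : 0 < n := by omega
  have hCS : n.choose (κ ℓ) * (slice (L-1) (n - κ ℓ) (removeIdx κ ℓ)).card
      = (slice L n κ).card := choose_mul_card hL ℓ hκn.le
  have hS0 : (slice (L-1) (n - κ ℓ) (removeIdx κ ℓ)).card ≠ 0 := by
    intro h; rw [h, Nat.mul_zero] at hCS; exact hne hCS.symm
  have hC0 : n.choose (κ ℓ) ≠ 0 := (Nat.choose_pos hκn.le).ne'
  have key : ∀ B ∈ Finset.powersetCard (κ ℓ) (Finset.univ : Finset (Fin n)),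
      entropy ((slice L n κ).filter fun ω => xi ℓ ω = B) f ≤
        (τℓ * (1 / (2 * ((n - κ ℓ : ℕ) : ℝ))) *
            (1 / ((slice (L-1) (n - κ ℓ) (removeIdx κ ℓ)).card : ℝ))) *
          ∑ ω ∈ (slice L n κ).filter (fun ω => xi ℓ ω = B),
            ∑ q ∈ Finset.univ.filter (fun q : Fin n × Fin n => q.1 < q.2),
              (if q.1 ∉ xi ℓ ω ∧ q.2 ∉ xi ℓ ω then
                grad q.1 q.2 (fun ω' => Real.sqrt (f ω')) ω *
                  grad q.1 q.2 (fun ω' => Real.sqrt (f ω')) ω else 0) := by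
    intro B hB
    have hB' := Finset.mem_powersetCard_univ.mp hB
    have hBc : Bᶜ.card = n - κ ℓ := by rw [Finset.card_compl, hB', Fintype.card_fin]
    refine le_trans (step1 hL hB' hBc τℓ hτℓ f hf) (le_of_eq ?_)
    have e1 : ∀ ω ∈ (slice L n κ).filter (fun ω => xi ℓ ω = B),
        (∑ q ∈ Finset.univ.filter (fun q : Fin n × Fin n => q.1 < q.2),
            (if q.1 ∉ xi ℓ ω ∧ q.2 ∉ xi ℓ ω then
              grad q.1 q.2 (fun ω' => Real.sqrt (f ω')) ω *
                grad q.1 q.2 (fun ω' => Real.sqrt (f ω')) ω else 0))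
          = ∑ q ∈ Finset.univ.filter
              (fun q : Fin n × Fin n => q.1 < q.2 ∧ q.1 ∉ B ∧ q.2 ∉ B),
              grad q.1 q.2 (fun ω' => Real.sqrt (f ω')) ω *
                grad q.1 q.2 (fun ω' => Real.sqrt (f ω')) ω := by
      intro ω hω
      have hxi : xi ℓ ω = B := (Finset.mem_filter.mp hω).2
      rw [hxi, ← Finset.sum_filter, Finset.filter_filter]
    rw [Finset.sum_congr rfl e1, Finset.sum_comm]
    have e2 : ∀ q : Fin n × Fin n,
        expect ((slice L n κ).filter fun ω => xi ℓ ω = B)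
            (fun ω => grad q.1 q.2 (fun ω' => Real.sqrt (f ω')) ω *
              grad q.1 q.2 (fun ω' => Real.sqrt (f ω')) ω)
          = (∑ ω ∈ (slice L n κ).filter (fun ω => xi ℓ ω = B),
              grad q.1 q.2 (fun ω' => Real.sqrt (f ω')) ω *
                grad q.1 q.2 (fun ω' => Real.sqrt (f ω')) ω)
              / ((slice (L-1) (n - κ ℓ) (removeIdx κ ℓ)).card : ℝ) := by
      intro q
      unfold expect
      rw [card_phi hL hB' hBc]
    rw [Finset.sum_congr rfl (fun q _ => e2 q), ← Finset.sum_div]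
    field_simp
  have sumA : ∑ B ∈ Finset.powersetCard (κ ℓ) (Finset.univ : Finset (Fin n)),
      entropy ((slice L n κ).filter fun ω => xi ℓ ω = B) f ≤
        (τℓ * (1 / (2 * ((n - κ ℓ : ℕ) : ℝ))) *
            (1 / ((slice (L-1) (n - κ ℓ) (removeIdx κ ℓ)).card : ℝ))) *
          ∑ ω ∈ slice L n κ,
            ∑ q ∈ Finset.univ.filter (fun q : Fin n × Fin n => q.1 < q.2),
              (if q.1 ∉ xi ℓ ω ∧ q.2 ∉ xi ℓ ω then
                grad q.1 q.2 (fun ω' => Real.sqrt (f ω')) ω *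
                  grad q.1 q.2 (fun ω' => Real.sqrt (f ω')) ω else 0) := by
    refine le_trans (Finset.sum_le_sum key) (le_of_eq ?_)
    rw [← Finset.mul_sum]
    congr 1
    exact Finset.sum_fiberwise_of_maps_to
      (fun ω hω => Finset.mem_powersetCard_univ.mpr (xi_card ω hω ℓ)) _
  have hα : (0:ℝ) ≤ (1 - (κ ℓ : ℝ)/(n:ℝ)) * (1/(n.choose (κ ℓ):ℝ)) := by
    apply mul_nonneg
    · have h1 : (κ ℓ:ℝ)/(n:ℝ) ≤ 1 := by
        rw [div_le_one (by exact_mod_cast hn0)]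
        exact_mod_cast hκn.le
      linarith
    · positivity
  calc (1 - (κ ℓ : ℝ) / (n : ℝ)) *
      ((1 / (n.choose (κ ℓ) : ℝ)) *
        ∑ B ∈ Finset.powersetCard (κ ℓ) (Finset.univ : Finset (Fin n)),
          entropy ((slice L n κ).filter fun ω => xi ℓ ω = B) f)
      = ((1 - (κ ℓ : ℝ)/(n:ℝ)) * (1/(n.choose (κ ℓ):ℝ))) *
        ∑ B ∈ Finset.powersetCard (κ ℓ) (Finset.univ : Finset (Fin n)),
          entropy ((slice L n κ).filter fun ω => xi ℓ ω = B) f := by ring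
    _ ≤ ((1 - (κ ℓ : ℝ)/(n:ℝ)) * (1/(n.choose (κ ℓ):ℝ))) *
        ((τℓ * (1 / (2 * ((n - κ ℓ : ℕ) : ℝ))) *
            (1 / ((slice (L-1) (n - κ ℓ) (removeIdx κ ℓ)).card : ℝ))) *
          ∑ ω ∈ slice L n κ,
            ∑ q ∈ Finset.univ.filter (fun q : Fin n × Fin n => q.1 < q.2),
              (if q.1 ∉ xi ℓ ω ∧ q.2 ∉ xi ℓ ω then
                grad q.1 q.2 (fun ω' => Real.sqrt (f ω')) ω *
                  grad q.1 q.2 (fun ω' => Real.sqrt (f ω')) ω else 0)) :=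
        mul_le_mul_of_nonneg_left sumA hα
    _ = τℓ * ((1 / (2 * (n : ℝ))) * ((1 / ((slice L n κ).card : ℝ)) *
        ∑ ω ∈ slice L n κ,
          ∑ q ∈ Finset.univ.filter (fun q : Fin n × Fin n => q.1 < q.2),
            (if q.1 ∉ xi ℓ ω ∧ q.2 ∉ xi ℓ ω then
              grad q.1 q.2 (fun ω' => Real.sqrt (f ω')) ω *
                grad q.1 q.2 (fun ω' => Real.sqrt (f ω')) ω else 0))) := by
        have h1 : ((slice L n κ).card : ℝ)
            = (n.choose (κ ℓ) : ℝ) * ((slice (L-1) (n - κ ℓ) (removeIdx κ ℓ)).card : ℝ) := by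
          exact_mod_cast hCS.symm
        have h2 : ((n - κ ℓ : ℕ):ℝ) = (n:ℝ) - (κ ℓ:ℝ) := by
          rw [Nat.cast_sub hκn.le]
        have hn' : (n:ℝ) ≠ 0 := Nat.cast_ne_zero.mpr hn0.ne'
        have hm' : (n:ℝ) - (κ ℓ:ℝ) ≠ 0 := by
          have : (κ ℓ:ℝ) < (n:ℝ) := by exact_mod_cast hκn
          linarith
        have hC' : (n.choose (κ ℓ) : ℝ) ≠ 0 := Nat.cast_ne_zero.mpr hC0
        have hS' : ((slice (L-1) (n - κ ℓ) (removeIdx κ ℓ)).card : ℝ) ≠ 0 :=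
          Nat.cast_ne_zero.mpr hS0
        rw [h1, h2]
        field_simp

lemma pointwise {L n : ℕ} (hL : 2 ≤ L) (ω : Fin n → Fin L) (i j : Fin n)
    (heq : i < j) (F : (Fin n → Fin L) → ℝ) :
    (∑ ℓ' : Fin L, if i ∉ xi ℓ' ω ∧ j ∉ xi ℓ' ω then grad i j F ω * grad i j F ω else 0)
      ≤ ((L:ℝ) - 2) * (grad i j F ω * grad i j F ω) := by
  classical
  by_cases hv : ω i = ω j
  · have h0 : grad i j F ω = 0 := by
      unfold grad
      have hs : ω ∘ Equiv.swap i j = ω := by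
        funext x
        rcases eq_or_ne x i with rfl | hxi
        · simp only [Function.comp_apply, Equiv.swap_apply_left]
          exact hv.symm
        rcases eq_or_ne x j with rfl | hxj
        · simp only [Function.comp_apply, Equiv.swap_apply_right]
          exact hv
        · simp [Equiv.swap_apply_of_ne_of_ne hxi hxj]
      rw [hs]
      ring
    simp [h0]
  · have hset : (Finset.univ.filter (fun ℓ' : Fin L => i ∉ xi ℓ' ω ∧ j ∉ xi ℓ' ω))
        = Finset.univ \ {ω i, ω j} := by
      ext ℓ'
      simp only [xi, Finset.mem_filter, Finset.mem_univ, true_and, Finset.mem_sdiff,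
        Finset.mem_insert, Finset.mem_singleton]
      constructor
      · rintro ⟨h1, h2⟩
        push_neg
        exact ⟨fun hc => h1 hc.symm, fun hc => h2 hc.symm⟩
      · intro h
        push_neg at h
        exact ⟨fun hc => h.1 hc.symm, fun hc => h.2 hc.symm⟩
    have hcard : (Finset.univ.filter
        (fun ℓ' : Fin L => i ∉ xi ℓ' ω ∧ j ∉ xi ℓ' ω)).card = L - 2 := by
      rw [hset, Finset.card_sdiff_of_subset (by simp), Finset.card_univ, Fintype.card_fin,
        Finset.card_insert_of_notMem (by simpa using hv), Finset.card_singleton]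
    rw [← Finset.sum_filter, Finset.sum_const, hcard, nsmul_eq_mul]
    apply le_of_eq
    congr 1
    push_cast [hL]
    ring

end Transport

lemma main_aux (L : ℕ) (hL : 2 ≤ L) (κ : Fin L → ℕ) (hκ : ∀ ℓ, 0 < κ ℓ)
    (n : ℕ) (hn : n = ∑ ℓ, κ ℓ)
    (τ : Fin L → ℝ)
    (hτ : ∀ ℓ, ∀ g : (Fin (n - κ ℓ) → Fin (L - 1)) → ℝ, (∀ ω, 0 ≤ g ω) →
      entropy (slice (L - 1) (n - κ ℓ) (removeIdx κ ℓ)) g ≤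
        τ ℓ * dirichlet (slice (L - 1) (n - κ ℓ) (removeIdx κ ℓ))
          (fun ω => Real.sqrt (g ω)) (fun ω => Real.sqrt (g ω)))
    (T : ℝ) (hT0 : 0 ≤ T) (hTτ : ∀ ℓ, τ ℓ ≤ T)
    (f : (Fin n → Fin L) → ℝ) (hf : ∀ ω, 0 ≤ f ω) :
    ∑ ℓ : Fin L, (1 - (κ ℓ : ℝ) / (n : ℝ)) *
      ((1 / (n.choose (κ ℓ) : ℝ)) *
        ∑ A ∈ Finset.powersetCard (κ ℓ) (Finset.univ : Finset (Fin n)),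
          entropy ((slice L n κ).filter fun ω => xi ℓ ω = A) f) ≤
      ((L : ℝ) - 2) * T *
        dirichlet (slice L n κ) (fun ω => Real.sqrt (f ω)) (fun ω => Real.sqrt (f ω)) := by
  classical
  by_cases hne : (slice L n κ).card = 0
  · have he : slice L n κ = ∅ := Finset.card_eq_zero.mp hne
    simp [he, entropy, expect, dirichlet, Finset.filter_empty]
  · have hκn : ∀ ℓ, κ ℓ < n := by
      intro ℓ
      have h2 : ∃ ℓ' : Fin L, ℓ' ≠ ℓ := by
        by_cases h : ℓ = ⟨0, by omega⟩
        · exact ⟨⟨1, by omega⟩, by subst h; intro hc; rw [Fin.ext_iff] at hc; simp at hc⟩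
        · exact ⟨⟨0, by omega⟩, fun hc => h hc.symm⟩
      obtain ⟨ℓ', hℓ'⟩ := h2
      have hsum := Finset.sum_le_sum_of_subset
        (Finset.subset_univ ({ℓ, ℓ'} : Finset (Fin L))) (f := κ)
      rw [Finset.sum_pair (Ne.symm hℓ')] at hsum
      have hpos := hκ ℓ'
      omega
    refine le_trans (Finset.sum_le_sum
      (fun ℓ _ => stepell hL (hκn ℓ) (τ ℓ) (hτ ℓ) f hf hne)) ?_
    have hW : ∀ ℓ : Fin L, (0:ℝ) ≤ ∑ ω ∈ slice L n κ,
        ∑ q ∈ Finset.univ.filter (fun q : Fin n × Fin n => q.1 < q.2),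
          (if q.1 ∉ xi ℓ ω ∧ q.2 ∉ xi ℓ ω then
            grad q.1 q.2 (fun ω' => Real.sqrt (f ω')) ω *
              grad q.1 q.2 (fun ω' => Real.sqrt (f ω')) ω else 0) := by
      intro ℓ
      refine Finset.sum_nonneg fun ω _ => Finset.sum_nonneg fun q _ => ?_
      split
      · exact mul_self_nonneg _
      · exact le_refl 0
    have hc0 : (0:ℝ) ≤ 1 / (2 * (n:ℝ)) := by positivity
    have hd0 : (0:ℝ) ≤ 1 / (((slice L n κ).card : ℕ) : ℝ) := by positivity
    have step2 : ∑ ℓ : Fin L, τ ℓ * ((1 / (2 * (n : ℝ))) *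
          ((1 / ((slice L n κ).card : ℝ)) *
        ∑ ω ∈ slice L n κ,
          ∑ q ∈ Finset.univ.filter (fun q : Fin n × Fin n => q.1 < q.2),
            (if q.1 ∉ xi ℓ ω ∧ q.2 ∉ xi ℓ ω then
              grad q.1 q.2 (fun ω' => Real.sqrt (f ω')) ω *
                grad q.1 q.2 (fun ω' => Real.sqrt (f ω')) ω else 0)))
        ≤ ∑ ℓ : Fin L, T * ((1 / (2 * (n : ℝ))) *
          ((1 / ((slice L n κ).card : ℝ)) *
        ∑ ω ∈ slice L n κ,
          ∑ q ∈ Finset.univ.filter (fun q : Fin n × Fin n => q.1 < q.2),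
            (if q.1 ∉ xi ℓ ω ∧ q.2 ∉ xi ℓ ω then
              grad q.1 q.2 (fun ω' => Real.sqrt (f ω')) ω *
                grad q.1 q.2 (fun ω' => Real.sqrt (f ω')) ω else 0))) := by
      refine Finset.sum_le_sum fun ℓ _ => mul_le_mul_of_nonneg_right (hTτ ℓ) ?_
      exact mul_nonneg hc0 (mul_nonneg hd0 (hW ℓ))
    refine le_trans step2 ?_
    rw [← Finset.mul_sum, ← Finset.mul_sum, ← Finset.mul_sum]
    have h4 : ∑ ℓ : Fin L, ∑ ω ∈ slice L n κ,
        ∑ q ∈ Finset.univ.filter (fun q : Fin n × Fin n => q.1 < q.2),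
          (if q.1 ∉ xi ℓ ω ∧ q.2 ∉ xi ℓ ω then
            grad q.1 q.2 (fun ω' => Real.sqrt (f ω')) ω *
              grad q.1 q.2 (fun ω' => Real.sqrt (f ω')) ω else 0)
        ≤ ((L:ℝ) - 2) * ∑ q ∈ Finset.univ.filter (fun q : Fin n × Fin n => q.1 < q.2),
            ∑ ω ∈ slice L n κ,
              grad q.1 q.2 (fun ω' => Real.sqrt (f ω')) ω *
                grad q.1 q.2 (fun ω' => Real.sqrt (f ω')) ω := by
      rw [Finset.sum_comm]
      have hin : ∀ ω ∈ slice L n κ,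
          (∑ ℓ : Fin L, ∑ q ∈ Finset.univ.filter (fun q : Fin n × Fin n => q.1 < q.2),
            (if q.1 ∉ xi ℓ ω ∧ q.2 ∉ xi ℓ ω then
              grad q.1 q.2 (fun ω' => Real.sqrt (f ω')) ω *
                grad q.1 q.2 (fun ω' => Real.sqrt (f ω')) ω else 0))
          ≤ ((L:ℝ) - 2) * ∑ q ∈ Finset.univ.filter (fun q : Fin n × Fin n => q.1 < q.2),
              grad q.1 q.2 (fun ω' => Real.sqrt (f ω')) ω *
                grad q.1 q.2 (fun ω' => Real.sqrt (f ω')) ω := by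
        intro ω _
        rw [Finset.sum_comm]
        refine le_trans (Finset.sum_le_sum fun q hq =>
          pointwise hL ω q.1 q.2 (Finset.mem_filter.mp hq).2 (fun ω' => Real.sqrt (f ω')))
          (le_of_eq (Finset.mul_sum _ _ _).symm)
      refine le_trans (Finset.sum_le_sum hin) (le_of_eq ?_)
      rw [← Finset.mul_sum, Finset.sum_comm]
    have h5 : dirichlet (slice L n κ) (fun ω => Real.sqrt (f ω)) (fun ω => Real.sqrt (f ω))
        = (1 / (2 * (n:ℝ))) * ((1 / ((slice L n κ).card : ℝ)) *
            ∑ q ∈ Finset.univ.filter (fun q : Fin n × Fin n => q.1 < q.2),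
              ∑ ω ∈ slice L n κ,
                grad q.1 q.2 (fun ω' => Real.sqrt (f ω')) ω *
                  grad q.1 q.2 (fun ω' => Real.sqrt (f ω')) ω) := by
      unfold dirichlet expect
      rw [← Finset.sum_div]
      ring
    rw [h5]
    have := mul_le_mul_of_nonneg_left (mul_le_mul_of_nonneg_left
      (mul_le_mul_of_nonneg_left h4 hd0) hc0) hT0
    refine le_trans this (le_of_eq ?_)
    ring


/-- first conditional-entropy estimate (bound on `Σ_ℓ (1-κ_ℓ/n) E[Ent(f|ξ_ℓ)]`). -/
theorem multislice_first_estimate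
    (L : ℕ) (hL : 2 ≤ L) (κ : Fin L → ℕ) (hκ : ∀ ℓ, 0 < κ ℓ)
    (n : ℕ) (hn : n = ∑ ℓ, κ ℓ)
    (τ : Fin L → ℝ) (hτ0 : ∀ ℓ, 0 ≤ τ ℓ)
    (hτ : ∀ ℓ, ∀ g : (Fin (n - κ ℓ) → Fin (L - 1)) → ℝ, (∀ ω, 0 ≤ g ω) →
      entropy (slice (L - 1) (n - κ ℓ) (removeIdx κ ℓ)) g ≤
        τ ℓ * dirichlet (slice (L - 1) (n - κ ℓ) (removeIdx κ ℓ))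
          (fun ω => Real.sqrt (g ω)) (fun ω => Real.sqrt (g ω)))
    (f : (Fin n → Fin L) → ℝ) (hf : ∀ ω, 0 ≤ f ω) :
    ∑ ℓ : Fin L, (1 - (κ ℓ : ℝ) / (n : ℝ)) *
      ((1 / (n.choose (κ ℓ) : ℝ)) *
        ∑ A ∈ Finset.powersetCard (κ ℓ) (Finset.univ : Finset (Fin n)),
          entropy ((slice L n κ).filter fun ω => xi ℓ ω = A) f) ≤
      ((L : ℝ) - 2) * (Finset.univ.sup' ⟨⟨0, by omega⟩, Finset.mem_univ _⟩ τ) *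
        dirichlet (slice L n κ) (fun ω => Real.sqrt (f ω)) (fun ω => Real.sqrt (f ω)) := by
  refine main_aux L hL κ hκ n hn τ hτ
    (Finset.univ.sup' ⟨⟨0, by omega⟩, Finset.mem_univ _⟩ τ) ?_
    (fun ℓ => Finset.le_sup' τ (Finset.mem_univ ℓ)) f hf
  exact le_trans (hτ0 ⟨0, by omega⟩) (Finset.le_sup' τ (Finset.mem_univ _))

end Multislice
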